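/- Fix an integer k ≥ 1 and let ε := 1/((k+1/2)π). Define F(μ, B) := ε·μ + (−1)^k·exp(−μ) − (1/(2B))·(1 + exp(−π·ε·μ)) for real μ and real B ≠ 0, and set B₀ := (−1)^k. Then the partial derivative ∂F/∂μ at (0, B₀) is nonzero; in fact 1 − (π/2 + B₀)·ε > 0, and the implicit derivative μ'(B₀) = −(∂F/∂B)/(∂F/∂μ) evaluated at (0, B₀) satisfies μ'(B₀)·(1 − (π/2 + B₀)·ε) = B₀, so that sign(μ'(B₀)) = (−1)^k. In particular the zero eigenvalue at B = B₀ is simple and its continuation μ(B) crosses zero with strictly positive speed in the direction of larger |B|. -/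

import Mathlib

open Real

/-- Simplicity and crossing direction of the zero eigenvalue at `B₀ = (-1)^k` for the real
characteristic equation `F(μ,B) = 0` of the controlled delay equation. -/
theorem stmt_1 (k : ℕ) (hk : 1 ≤ k)
    (ε : ℝ) (hε : ε = 1 / ((k + 1/2) * π))
    (F : ℝ → ℝ → ℝ)
    (hF : ∀ μ B, F μ B = ε * μ + (-1 : ℝ)^k * Real.exp (-μ)
          - (1 / (2*B)) * (1 + Real.exp (-(π * ε * μ))))
    (B₀ : ℝ) (hB₀ : B₀ = (-1 : ℝ)^k) :
    deriv (fun μ => F μ B₀) 0 ≠ 0 ∧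
    1 - (π/2 + B₀) * ε > 0 ∧
    (-(deriv (fun B => F 0 B) B₀) / deriv (fun μ => F μ B₀) 0) * (1 - (π/2 + B₀) * ε) = B₀ ∧
    Real.sign (-(deriv (fun B => F 0 B) B₀) / deriv (fun μ => F μ B₀) 0) = (-1 : ℝ)^k := by
  have hB1 : B₀ = 1 ∨ B₀ = -1 := by
    rcases Nat.even_or_odd k with h | h
    · left; rw [hB₀, h.neg_one_pow]
    · right; rw [hB₀, h.neg_one_pow]
  have hBne : B₀ ≠ 0 := by rcases hB1 with h | h <;> rw [h] <;> norm_num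
  have hBsq : B₀ * B₀ = 1 := by rcases hB1 with h | h <;> rw [h] <;> norm_num
  have hπ : (3:ℝ) < π := Real.pi_gt_three
  have hk' : (3:ℝ)/2 ≤ (k:ℝ) + 1/2 := by
    have : (1:ℝ) ≤ (k:ℝ) := by exact_mod_cast hk
    linarith
  have hεpos : 0 < ε := by rw [hε]; positivity
  have hπε : π * ε ≤ 2/3 := by
    rw [hε, mul_one_div, div_le_div_iff₀ (by positivity) (by norm_num)]
    nlinarith
  have hεle : ε ≤ 2/9 := by
    rw [hε, div_le_div_iff₀ (by positivity) (by norm_num)]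
    nlinarith
  have hD : 1 - (π/2 + B₀) * ε > 0 := by
    have hBε : B₀ * ε ≤ ε := by
      rcases hB1 with h | h <;> rw [h] <;> nlinarith
    nlinarith
  set D := 1 - (π/2 + B₀) * ε with hDdef
  -- derivative in μ
  have hμ : HasDerivAt (fun μ => F μ B₀) (-B₀ * D) 0 := by
    have h1 : HasDerivAt (fun μ : ℝ => ε * μ) (ε * 1) 0 := (hasDerivAt_id 0).const_mul ε
    have h2 : HasDerivAt (fun μ : ℝ => Real.exp (-μ)) (Real.exp (-0) * (-1)) 0 :=
      (hasDerivAt_neg 0).exp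
    have h3 : HasDerivAt (fun μ : ℝ => -(π * ε * μ)) (-(π * ε * 1)) 0 :=
      ((hasDerivAt_id 0).const_mul (π*ε)).neg
    have h4 : HasDerivAt (fun μ : ℝ => Real.exp (-(π * ε * μ)))
        (Real.exp (-(π * ε * 0)) * -(π * ε * 1)) 0 := h3.exp
    have h5 := (h1.add (h2.const_mul ((-1:ℝ)^k))).sub
      (((hasDerivAt_const (0:ℝ) (1:ℝ)).add h4).const_mul (1/(2*B₀)))
    have h6 : HasDerivAt (fun μ => F μ B₀) _ 0 :=
      h5.congr_of_eventuallyEq (Filter.Eventually.of_forall fun μ => hF μ B₀)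
    convert h6 using 1
    rw [← hB₀]
    simp only [Real.exp_zero, mul_zero, neg_zero, zero_add, mul_one, one_mul]
    have h2B : (1:ℝ)/(2*B₀) = B₀/2 := by
      rw [div_eq_div_iff (by positivity) (by norm_num)]
      linear_combination -2*hBsq
    rw [hDdef, h2B]
    linear_combination ε * hBsq
  have hμd : deriv (fun μ => F μ B₀) 0 = -B₀ * D := hμ.deriv
  have hμne : deriv (fun μ => F μ B₀) 0 ≠ 0 := by
    rw [hμd]
    exact mul_ne_zero (neg_ne_zero.mpr hBne) hD.ne'
  -- derivative in B
  have hB : HasDerivAt (fun B => F 0 B) 1 B₀ := by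
    have h1 : HasDerivAt (fun B : ℝ => (2*B)⁻¹) (-(2*1)/(2*B₀)^2) B₀ :=
      ((hasDerivAt_id B₀).const_mul 2).inv (by simpa using hBne)
    have h2 := (hasDerivAt_const B₀ (ε * 0 + (-1:ℝ)^k * Real.exp (-0))).sub
      (h1.mul_const (1 + Real.exp (-(π * ε * 0))))
    have h6 : HasDerivAt (fun B => F 0 B) _ B₀ :=
      h2.congr_of_eventuallyEq (Filter.Eventually.of_forall fun B =>
        show F 0 B = _ from (hF 0 B).trans (by rw [one_div]; rfl))
    convert h6 using 1
    have h4B : (2*B₀)^2 = 4 := by nlinarith [hBsq]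
    simp only [Real.exp_zero, mul_zero, neg_zero, h4B]
    norm_num
  have hBd : deriv (fun B => F 0 B) B₀ = 1 := hB.deriv
  have hq : (-(deriv (fun B => F 0 B) B₀) / deriv (fun μ => F μ B₀) 0) = B₀ / D := by
    rw [hBd, hμd]
    have hDne : D ≠ 0 := hD.ne'
    field_simp
    nlinarith [hBsq]
  refine ⟨hμne, hD, ?_, ?_⟩
  · rw [hq, div_mul_cancel₀ _ hD.ne']
  · rw [hq, ← hB₀]
    rcases hB1 with h | h
    · rw [h]; exact Real.sign_of_pos (by positivity)
    · rw [h]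
      have : (-1:ℝ)/D < 0 := div_neg_of_neg_of_pos (by norm_num) hD
      rw [Real.sign_of_neg this]
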